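/- Let (R, m) be a commutative local ring such that for every r ∈ R, every R-module map seemingly divisible by r is divisible by r. Then m ≠ m² unless m = 0. -/

import Mathlib

universe u

def SD (R : Type u) [CommRing R] : Prop :=
  ∀ (r : R) (M N : Type u) [AddCommGroup M] [Module R M] [AddCommGroup N]
      [Module R N] (f : M →ₗ[R] N),
      (∀ m : M, r • m = 0 → f m = 0) → (∀ m : M, ∃ n : N, f m = r • n) →
      ∃ g : M →ₗ[R] N, f = r • g

lemma mem_of_mul_unit {R : Type u} [CommRing R] {I : Ideal R} {x u : R}
    (hu : IsUnit u) (h : x * u ∈ I) : x ∈ I := by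
  obtain ⟨v, rfl⟩ := hu
  have := Ideal.mul_mem_right (↑v⁻¹ : R) I h
  rwa [mul_assoc, ← Units.val_mul, mul_inv_cancel, Units.val_one, mul_one] at this

theorem sd_total {R : Type u} [CommRing R] [IsLocalRing R] (hR : SD R) (a b : R) :
    a ∈ Ideal.span {b} ∨ b ∈ Ideal.span {a} := by
  classical
  set Ia : Ideal R := Ideal.span {a} with hIa
  set J : Ideal R := Ideal.span {a} ⊓ Ideal.span {b} with hJ
  have hle : Ia ≤ Submodule.comap (b • (LinearMap.id : R →ₗ[R] R)) J := by
    intro x hx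
    simp only [Submodule.mem_comap, LinearMap.smul_apply, LinearMap.id_apply, smul_eq_mul,
      hJ, Submodule.mem_inf]
    exact ⟨Ideal.mul_mem_left _ _ hx,
      Ideal.mul_mem_right _ _ (Ideal.mem_span_singleton_self b)⟩
  set f : (R ⧸ Ia) →ₗ[R] (R ⧸ J) := Submodule.mapQ Ia J (b • LinearMap.id) hle with hf
  have hfmk : ∀ x : R, f (Submodule.Quotient.mk x) = Submodule.Quotient.mk (b * x) := by
    intro x
    have h := Submodule.mapQ_apply (p := Ia) (q := J) (b • LinearMap.id) (h := hle) x
    rw [hf, h]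
    congr 1
  have htor : ∀ m : R ⧸ Ia, b • m = 0 → f m = 0 := by
    intro m hm
    obtain ⟨x, rfl⟩ := Submodule.Quotient.mk_surjective _ m
    rw [← Submodule.Quotient.mk_smul, Submodule.Quotient.mk_eq_zero] at hm
    rw [hfmk, Submodule.Quotient.mk_eq_zero]
    exact Submodule.mem_inf.2 ⟨by simpa [smul_eq_mul] using hm,
      Ideal.mul_mem_right _ _ (Ideal.mem_span_singleton_self b)⟩
  have hpt : ∀ m : R ⧸ Ia, ∃ n : R ⧸ J, f m = b • n := by
    intro m
    obtain ⟨x, rfl⟩ := Submodule.Quotient.mk_surjective _ m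
    exact ⟨Submodule.Quotient.mk x, by rw [hfmk, ← Submodule.Quotient.mk_smul, smul_eq_mul]⟩
  obtain ⟨g, hg⟩ := hR b (R ⧸ Ia) (R ⧸ J) f htor hpt
  obtain ⟨d, hd⟩ := Submodule.Quotient.mk_surjective _ (g (Submodule.Quotient.mk 1))
  have h1 : b * (1 - d) ∈ J := by
    have h := LinearMap.congr_fun hg (Submodule.Quotient.mk 1)
    rw [LinearMap.smul_apply, ← hd, ← Submodule.Quotient.mk_smul, hfmk, smul_eq_mul] at h
    have h' := (Submodule.Quotient.eq J).1 h
    have : b * 1 - b * d = b * (1 - d) := by ring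
    rwa [this] at h'
  have h2 : a * d ∈ J := by
    have hma : (Submodule.Quotient.mk a : R ⧸ Ia) = 0 := by
      rw [Submodule.Quotient.mk_eq_zero]; exact Ideal.mem_span_singleton_self a
    have h : a • g (Submodule.Quotient.mk 1) = 0 := by
      rw [← map_smul, ← Submodule.Quotient.mk_smul, smul_eq_mul, mul_one, hma, map_zero]
    rw [← hd, ← Submodule.Quotient.mk_smul, Submodule.Quotient.mk_eq_zero, smul_eq_mul] at h
    exact h
  rcases IsLocalRing.isUnit_or_isUnit_of_add_one (a := d) (b := 1 - d) (by ring) with hu | hu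
  · left
    exact mem_of_mul_unit hu (Submodule.mem_inf.1 h2).2
  · right
    have := (Submodule.mem_inf.1 h1).1
    exact mem_of_mul_unit hu this

/-- every element of the maximal ideal factors as a product of two elements of it -/
theorem sd_fac {R : Type u} [CommRing R] [IsLocalRing R] (hR : SD R)
    (h2 : IsLocalRing.maximalIdeal R = (IsLocalRing.maximalIdeal R) ^ 2)
    {x : R} (hx : x ∈ IsLocalRing.maximalIdeal R) :
    ∃ p : R × R, p.1 ∈ IsLocalRing.maximalIdeal R ∧ p.2 ∈ IsLocalRing.maximalIdeal R ∧
      x = p.1 * p.2 := by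
  classical
  have hx2 : x ∈ IsLocalRing.maximalIdeal R * IsLocalRing.maximalIdeal R := by
    rw [← pow_two, ← h2]; exact hx
  refine Submodule.mul_induction_on hx2 (fun m hm n hn => ⟨(m, n), hm, hn, rfl⟩) ?_
  rintro x y ⟨⟨a, b⟩, ha, hb, rfl⟩ ⟨⟨c, d⟩, hc, hd, rfl⟩
  rcases sd_total hR (a * b) (c * d) with h | h
  · obtain ⟨t, ht⟩ := Ideal.mem_span_singleton'.1 h
    refine ⟨(c, (1 + t) * d), hc, Ideal.mul_mem_left _ _ hd, ?_⟩
    simp only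
    rw [← ht]; ring
  · obtain ⟨t, ht⟩ := Ideal.mem_span_singleton'.1 h
    refine ⟨(a, (1 + t) * b), ha, Ideal.mul_mem_left _ _ hb, ?_⟩
    simp only
    rw [← ht]; ring
namespace SDAux
variable {R : Type u} [CommRing R]

abbrev Phi (R : Type u) [CommRing R] : Type u := ℕ →₀ R
abbrev Qt (R : Type u) [CommRing R] (r : R) : Type u := R ⧸ Ideal.span {r}
abbrev Tm (R : Type u) [CommRing R] (r : R) : Type u := ℕ →₀ Qt R r

variable (r : R) (a : ℕ → R)

noncomputable def nu (n : ℕ) : Phi R :=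
  Finsupp.single n 1 - Finsupp.single (n+1) (a (n+1))

noncomputable def tb (n : ℕ) : Tm R r :=
  -Finsupp.single n (Submodule.Quotient.mk 1)

noncomputable def rho (n : ℕ) : Phi R × Tm R r := (nu a n, tb r n)

noncomputable def Vs : Submodule R (Phi R) := Submodule.span R (Set.range (nu a))
noncomputable def Ks : Submodule R (Phi R × Tm R r) := Submodule.span R (Set.range (rho r a))

abbrev Msp : Type u := Phi R ⧸ Vs a
abbrev Esp : Type u := (Phi R × Tm R r) ⧸ Ks r a

-- every element of Qt is killed by r
lemma r_smul_qt (q : Qt R r) : r • q = 0 := by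
  obtain ⟨x, rfl⟩ := Submodule.Quotient.mk_surjective _ q
  rw [← Submodule.Quotient.mk_smul, Submodule.Quotient.mk_eq_zero, smul_eq_mul]
  exact Ideal.mem_span_singleton'.2 ⟨x, mul_comm x r⟩

lemma r_smul_tm (t : Tm R r) : r • t = 0 := by
  ext n
  rw [Finsupp.smul_apply, r_smul_qt]
  rfl

-- coefficient lemmas
lemma nu_coeff_zero (c : ℕ →₀ R) :
    (Finsupp.linearCombination R (nu a) c) 0 = c 0 := by
  have h : (Finsupp.lapply (M := R) (R := R) 0).comp (Finsupp.linearCombination R (nu a))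
      = Finsupp.lapply 0 := by
    apply Finsupp.lhom_ext
    intro j t
    simp only [LinearMap.comp_apply, Finsupp.linearCombination_single, Finsupp.lapply_apply,
      Finsupp.smul_apply, nu, Finsupp.sub_apply, Finsupp.single_apply]
    by_cases hj : j = 0 <;> simp [hj]
  exact LinearMap.congr_fun h c

lemma nu_coeff_succ (c : ℕ →₀ R) (n : ℕ) :
    (Finsupp.linearCombination R (nu a) c) (n+1) = c (n+1) - a (n+1) * c n := by
  have h : (Finsupp.lapply (M := R) (R := R) (n+1)).comp (Finsupp.linearCombination R (nu a))
      = Finsupp.lapply (n+1) - a (n+1) • Finsupp.lapply n := by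
    apply Finsupp.lhom_ext
    intro j t
    simp only [LinearMap.comp_apply, Finsupp.linearCombination_single, Finsupp.lapply_apply,
      Finsupp.smul_apply, nu, Finsupp.sub_apply, Finsupp.single_apply,
      LinearMap.sub_apply, LinearMap.smul_apply, smul_eq_mul]
    by_cases h2 : j = n
    · subst h2
      have h1 : ¬ (j = j + 1) := by omega
      simp [if_neg h1]
      ring
    · by_cases h1 : j = n + 1
      · subst h1
        have h3 : ¬ (n + 1 + 1 = n + 1) := by omega
        simp [if_neg h3, if_neg h2]
      · have h3 : ¬ (j + 1 = n + 1) := by omega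
        simp [if_neg h1, if_neg h2, if_neg h3]
  have := LinearMap.congr_fun h c
  simpa [smul_eq_mul] using this


-- components of linearCombination of rho
lemma rho_fst (c : ℕ →₀ R) :
    (Finsupp.linearCombination R (rho r a) c).1 = Finsupp.linearCombination R (nu a) c := by
  have h : (LinearMap.fst R (Phi R) (Tm R r)).comp (Finsupp.linearCombination R (rho r a))
      = Finsupp.linearCombination R (nu a) := by
    apply Finsupp.lhom_ext
    intro j t
    simp [rho]
  exact LinearMap.congr_fun h c

lemma rho_snd (c : ℕ →₀ R) :
    (Finsupp.linearCombination R (rho r a) c).2 = Finsupp.linearCombination R (tb r) c := by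
  have h : (LinearMap.snd R (Phi R) (Tm R r)).comp (Finsupp.linearCombination R (rho r a))
      = Finsupp.linearCombination R (tb r) := by
    apply Finsupp.lhom_ext
    intro j t
    simp [rho]
  exact LinearMap.congr_fun h c

lemma tb_coeff (c : ℕ →₀ R) (n : ℕ) :
    (Finsupp.linearCombination R (tb r) c) n
      = -(Submodule.Quotient.mk (c n) : Qt R r) := by
  have h : (Finsupp.lapply (M := Qt R r) (R := R) n).comp (Finsupp.linearCombination R (tb r))
      = -(((Ideal.span {r}).mkQ).comp (Finsupp.lapply n)) := by
    apply Finsupp.lhom_ext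
    intro j t
    simp only [LinearMap.comp_apply, Finsupp.linearCombination_single, Finsupp.lapply_apply,
      LinearMap.neg_apply, Submodule.mkQ_apply, tb, Finsupp.smul_apply, Finsupp.neg_apply,
      Finsupp.single_apply, smul_ite, smul_neg, smul_zero, neg_zero]
    by_cases hj : j = n
    · subst hj
      simp only [if_pos rfl]
      rw [← Submodule.Quotient.mk_smul]
      simp
    · simp [if_neg hj]
  have := LinearMap.congr_fun h c
  simpa using this


lemma ks_eq : Ks r a = LinearMap.range (Finsupp.linearCombination R (rho r a)) := by
  rw [Finsupp.range_linearCombination]; rfl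

lemma vs_eq : Vs a = LinearMap.range (Finsupp.linearCombination R (nu a)) := by
  rw [Finsupp.range_linearCombination]; rfl

lemma Vs_le_ker : Vs a ≤ LinearMap.ker
    (((Ks r a).mkQ).comp ((LinearMap.inl R (Phi R) (Tm R r)).comp
      (r • (LinearMap.id : Phi R →ₗ[R] Phi R)))) := by
  rw [Vs, Submodule.span_le]
  rintro _ ⟨n, rfl⟩
  simp only [SetLike.mem_coe, LinearMap.mem_ker, LinearMap.comp_apply, LinearMap.inl_apply,
    LinearMap.smul_apply, LinearMap.id_apply, Submodule.mkQ_apply, Submodule.Quotient.mk_eq_zero]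
  have : ((r • nu a n, 0) : Phi R × Tm R r) = r • rho r a n := by
    rw [rho]
    refine Prod.ext rfl ?_
    rw [Prod.smul_snd, r_smul_tm]
  rw [this]
  exact Submodule.smul_mem _ r (Submodule.subset_span ⟨n, rfl⟩)

noncomputable def fmap : Msp (R := R) a →ₗ[R] Esp r a :=
  (Vs a).liftQ _ (Vs_le_ker r a)

lemma fmap_mk (v : Phi R) :
    fmap r a (Submodule.Quotient.mk v) = Submodule.Quotient.mk (r • v, (0 : Tm R r)) := by
  rw [fmap, Submodule.liftQ_apply]
  rfl

lemma fmap_tor (x : Msp (R := R) a) (hx : r • x = 0) : fmap r a x = 0 := by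
  obtain ⟨v, rfl⟩ := Submodule.Quotient.mk_surjective _ x
  rw [← Submodule.Quotient.mk_smul, Submodule.Quotient.mk_eq_zero] at hx
  rw [vs_eq] at hx
  obtain ⟨b, hb⟩ := hx
  -- all coefficients of b lie in span {r}
  have hbI : ∀ n, b n ∈ Ideal.span {r} := by
    intro n
    induction n with
    | zero =>
        have h0 := nu_coeff_zero a b
        rw [hb] at h0
        rw [← h0, Finsupp.smul_apply, smul_eq_mul]
        exact Ideal.mem_span_singleton'.2 ⟨v 0, mul_comm _ _⟩
    | succ n ih =>
        have hs := nu_coeff_succ a b n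
        rw [hb] at hs
        have : b (n+1) = r * v (n+1) + a (n+1) * b n := by
          rw [Finsupp.smul_apply, smul_eq_mul] at hs
          linear_combination -hs
        rw [this]
        exact Ideal.add_mem _ (Ideal.mem_span_singleton'.2 ⟨v (n+1), mul_comm _ _⟩)
          (Ideal.mul_mem_left _ _ ih)
  rw [fmap_mk, Submodule.Quotient.mk_eq_zero, ks_eq]
  refine ⟨b, ?_⟩
  refine Prod.ext ?_ ?_
  · rw [rho_fst, hb]
  · rw [rho_snd]
    ext n
    rw [tb_coeff]
    simp only [Finsupp.coe_zero, Pi.zero_apply, neg_eq_zero]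
    rw [Submodule.Quotient.mk_eq_zero]
    exact hbI n

lemma fmap_pt (x : Msp (R := R) a) : ∃ n : Esp r a, fmap r a x = r • n := by
  obtain ⟨v, rfl⟩ := Submodule.Quotient.mk_surjective _ x
  refine ⟨Submodule.Quotient.mk (v, 0), ?_⟩
  rw [fmap_mk, ← Submodule.Quotient.mk_smul]
  congr 1
  refine Prod.ext rfl ?_
  simp


noncomputable def Achi (k n : ℕ) : R := if n ≤ k then ∏ j ∈ Finset.Ioc n k, a j else 0

lemma Achi_succ_mul {k n : ℕ} (h : n < k) : Achi a k n = a (n+1) * Achi a k (n+1) := by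
  rw [Achi, Achi, if_pos (le_of_lt h), if_pos (by omega : n + 1 ≤ k)]
  rw [← Finset.prod_Ioc_consecutive a (Nat.le_succ n) h]
  congr 1
  rw [Finset.prod_Ioc_succ_top (le_refl n), Finset.Ioc_self, Finset.prod_empty, one_mul]

noncomputable def chi0 (k : ℕ) : (Phi R × Tm R r) →ₗ[R] Qt R r :=
  (Finsupp.linearCombination R (fun n => (Submodule.Quotient.mk (Achi a k n) : Qt R r))).comp
     (LinearMap.fst R (Phi R) (Tm R r))
  + (Finsupp.lapply k).comp (LinearMap.snd R (Phi R) (Tm R r))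

lemma chi0_apply (k : ℕ) (v : Phi R) (t : Tm R r) :
    chi0 r a k (v, t) =
      Finsupp.linearCombination R (fun n => (Submodule.Quotient.mk (Achi a k n) : Qt R r)) v
      + t k := by
  rfl

lemma Ks_le_ker_chi0 (k : ℕ) : Ks r a ≤ LinearMap.ker (chi0 r a k) := by
  rw [Ks, Submodule.span_le]
  rintro _ ⟨n, rfl⟩
  simp only [SetLike.mem_coe, LinearMap.mem_ker]
  rw [rho, chi0_apply, nu, map_sub, Finsupp.linearCombination_single,
    Finsupp.linearCombination_single, tb, Finsupp.neg_apply, Finsupp.single_apply]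
  rcases lt_trichotomy n k with h | h | h
  · rw [if_neg (by omega : ¬ n = k), Achi_succ_mul a h, one_smul,
      ← Submodule.Quotient.mk_smul, smul_eq_mul]
    simp
  · subst h
    have h1 : Achi a n n = 1 := by
      rw [Achi, if_pos (le_refl n), Finset.Ioc_self, Finset.prod_empty]
    have h2 : Achi a n (n+1) = 0 := by
      rw [Achi, if_neg (by omega)]
    rw [h1, h2, if_pos rfl]
    simp
  · have h1 : Achi a k n = 0 := by rw [Achi, if_neg (by omega)]
    have h2 : Achi a k (n+1) = 0 := by rw [Achi, if_neg (by omega)]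
    rw [h1, h2, if_neg (by omega)]
    simp

noncomputable def chi (k : ℕ) : Esp r a →ₗ[R] Qt R r :=
  (Ks r a).liftQ (chi0 r a k) (Ks_le_ker_chi0 r a k)

lemma chi_mk (k : ℕ) (v : Phi R) (t : Tm R r) :
    chi r a k (Submodule.Quotient.mk (v, t)) = chi0 r a k (v, t) := by
  rw [chi, Submodule.liftQ_apply]

lemma linComb_mk (cfun : ℕ → R) (w : Phi R) :
    Finsupp.linearCombination R (fun n => (Submodule.Quotient.mk (cfun n) : Qt R r)) w
      = Submodule.Quotient.mk (∑ n ∈ w.support, w n * cfun n) := by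
  rw [Finsupp.linearCombination_apply, Finsupp.sum]
  have : (Submodule.Quotient.mk (∑ n ∈ w.support, w n * cfun n) : Qt R r)
      = ∑ n ∈ w.support, (Submodule.Quotient.mk (w n * cfun n) : Qt R r) := by
    rw [← Submodule.mkQ_apply, map_sum]
    rfl
  rw [this]
  refine Finset.sum_congr rfl fun n _ => ?_
  rw [← Submodule.Quotient.mk_smul, smul_eq_mul]

end SDAux

open SDAux in
theorem sd_sq {R : Type u} [CommRing R] [IsLocalRing R] (hR : SD R)
    (h2 : IsLocalRing.maximalIdeal R = (IsLocalRing.maximalIdeal R) ^ 2)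
    {r : R} (hr : r ∈ IsLocalRing.maximalIdeal R) : r * r = 0 := by
  classical
  have hstep : ∀ x : R, x ∈ IsLocalRing.maximalIdeal R →
      ∃ p : R × R, p.1 ∈ IsLocalRing.maximalIdeal R ∧ p.2 ∈ IsLocalRing.maximalIdeal R ∧
        x = p.1 * p.2 := fun x hx => sd_fac hR h2 hx
  let Y : ℕ → {x : R // x ∈ IsLocalRing.maximalIdeal R} := fun n => Nat.rec ⟨r, hr⟩
    (fun _ prev => ⟨((hstep prev.1 prev.2).choose).2, ((hstep prev.1 prev.2).choose_spec).2.1⟩) n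
  let y : ℕ → R := fun n => (Y n).1
  let a : ℕ → R := fun n => Nat.rec 0 (fun m _ => ((hstep (Y m).1 (Y m).2).choose).1) n
  have hy0 : y 0 = r := rfl
  have hyrec : ∀ n, y n = a (n+1) * y (n+1) := fun n =>
    ((hstep (Y n).1 (Y n).2).choose_spec).2.2
  have ha : ∀ n, a (n+1) ∈ IsLocalRing.maximalIdeal R := fun n =>
    ((hstep (Y n).1 (Y n).2).choose_spec).1
  have hy : ∀ n, y n ∈ IsLocalRing.maximalIdeal R := fun n => (Y n).2
  obtain ⟨g, hg⟩ := hR r (Msp (R := R) a) (Esp r a) (fmap r a)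
    (fun x hx => fmap_tor r a x hx) (fun x => fmap_pt r a x)
  set γ : ℕ → Esp r a := fun n => g (Submodule.Quotient.mk (Finsupp.single n 1)) with hγ
  have hγrec : ∀ n, γ n = a (n+1) • γ (n+1) := by
    intro n
    have hmk : (Submodule.Quotient.mk (Finsupp.single n 1) : Msp (R := R) a)
        = a (n+1) • Submodule.Quotient.mk (Finsupp.single (n+1) 1) := by
      rw [← Submodule.Quotient.mk_smul, Submodule.Quotient.eq]
      have : Finsupp.single n 1 - a (n+1) • Finsupp.single (n+1) (1:R) = nu a n := by
        rw [nu, Finsupp.smul_single, smul_eq_mul, mul_one]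
      rw [this]
      exact Submodule.subset_span ⟨n, rfl⟩
    rw [hγ]
    simp only
    rw [hmk, map_smul]
  have hγprod : ∀ m, γ 0 = (∏ j ∈ Finset.Ioc 0 m, a j) • γ m := by
    intro m
    induction m with
    | zero => rw [Finset.Ioc_self, Finset.prod_empty, one_smul]
    | succ m ih =>
        rw [ih, hγrec m, smul_smul, Finset.prod_Ioc_succ_top (Nat.zero_le m)]
  have hyprod : ∀ m, r = (∏ j ∈ Finset.Ioc 0 m, a j) * y m := by
    intro m
    induction m with
    | zero => rw [Finset.Ioc_self, Finset.prod_empty, one_mul, hy0]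
    | succ m ih =>
        rw [Finset.prod_Ioc_succ_top (Nat.zero_le m), ih, hyrec m]
        ring
  -- the divisibility equation at ε₀
  have h1 : r • γ 0 = Submodule.Quotient.mk (Finsupp.single 0 r, (0 : Tm R r)) := by
    have := LinearMap.congr_fun hg (Submodule.Quotient.mk (Finsupp.single 0 1))
    rw [fmap_mk, LinearMap.smul_apply] at this
    rw [hγ]
    simp only
    rw [← this, Finsupp.smul_single, smul_eq_mul, mul_one]
  obtain ⟨⟨v, τ⟩, hvt⟩ := Submodule.Quotient.mk_surjective _ (γ 0)
  have h1' : (Submodule.Quotient.mk (r • v, (0 : Tm R r)) : Esp r a)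
      = Submodule.Quotient.mk (Finsupp.single 0 r, (0 : Tm R r)) := by
    rw [← h1, ← hvt, ← Submodule.Quotient.mk_smul]
    congr 1
    refine Prod.ext rfl ?_
    rw [Prod.smul_snd, r_smul_tm]
  rw [Submodule.Quotient.eq, ks_eq] at h1'
  obtain ⟨b, hb⟩ := h1'
  have hfst : Finsupp.linearCombination R (nu a) b = r • v - Finsupp.single 0 r := by
    have := congrArg Prod.fst hb
    rw [rho_fst] at this
    simpa using this
  have hbI : ∀ n, b n ∈ Ideal.span {r} := by
    intro n
    have := congrArg Prod.snd hb
    rw [rho_snd] at this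
    simp only [Prod.snd_sub] at this
    have h0 : Finsupp.linearCombination R (tb r) b = 0 := by
      rw [this]; simp
    have := tb_coeff r b n
    rw [h0] at this
    simp only [Finsupp.coe_zero, Pi.zero_apply] at this
    have : (Submodule.Quotient.mk (b n) : Qt R r) = 0 := by
      rw [← neg_eq_zero, this]
    rwa [Submodule.Quotient.mk_eq_zero] at this
  -- divide b by r
  set ch : R → R := fun c => if c = 0 then 0 else
    if h : c ∈ Ideal.span {r} then (Ideal.mem_span_singleton'.mp h).choose else 0 with hch
  have hch0 : ch 0 = 0 := by simp [hch]
  have hchp : ∀ c, c ∈ Ideal.span {r} → ch c * r = c := by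
    intro c hc
    by_cases h0 : c = 0
    · simp [hch, h0]
    · rw [hch]
      simp only [if_neg h0, dif_pos hc]
      exact (Ideal.mem_span_singleton'.mp hc).choose_spec
  set bb : ℕ →₀ R := Finsupp.mapRange ch hch0 b with hbbdef
  have hbb : r • bb = b := by
    ext n
    rw [Finsupp.smul_apply, smul_eq_mul, hbbdef, Finsupp.mapRange_apply, mul_comm]
    exact hchp (b n) (hbI n)
  set w : Phi R := v - Finsupp.single 0 1 - Finsupp.linearCombination R (nu a) bb with hwdef
  have hrw : r • w = 0 := by
    rw [hwdef, smul_sub, smul_sub, ← map_smul, hbb, hfst, Finsupp.smul_single, smul_eq_mul,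
      mul_one]
    abel
  have hwn : ∀ n, r * w n = 0 := by
    intro n
    have := congrArg (fun u => Finsupp.toFun u n) hrw
    have h' : (r • w) n = (0 : Phi R) n := this
    simpa [Finsupp.smul_apply] using h'
  set τ' : Tm R r := τ - (Finsupp.linearCombination R (rho r a) bb).2 with hτ'
  have hrepr : γ 0 = Submodule.Quotient.mk (Finsupp.single 0 1 + w, τ') := by
    rw [← hvt, Submodule.Quotient.eq, ks_eq]
    refine ⟨bb, ?_⟩
    refine Prod.ext ?_ ?_
    · rw [rho_fst]
      simp only [Prod.fst_sub]
      rw [hwdef]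
      abel
    · rw [hτ']
      simp only [Prod.snd_sub]
      abel
  set k : ℕ := (w.support ∪ τ'.support).sup id + 1 with hk
  have hksupw : ∀ n ∈ w.support, n < k := by
    intro n hn
    have : n ≤ (w.support ∪ τ'.support).sup id :=
      Finset.le_sup (f := id) (Finset.mem_union_left _ hn)
    omega
  have hkτ : τ' k = 0 := by
    by_contra hne
    have hmem : k ∈ τ'.support := Finsupp.mem_support_iff.2 hne
    have : k ≤ (w.support ∪ τ'.support).sup id :=
      Finset.le_sup (f := id) (Finset.mem_union_right _ hmem)
    omega
  set z : R := ∑ n ∈ w.support, w n * Achi a k n with hz'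
  have hz : r * z = 0 := by
    rw [hz', Finset.mul_sum]
    refine Finset.sum_eq_zero fun n _ => ?_
    rw [← mul_assoc, hwn n, zero_mul]
  -- B side
  have hBside : chi r a k (γ 0) = Submodule.Quotient.mk (Achi a k 0 + z) := by
    rw [hrepr, chi_mk, chi0_apply, map_add, Finsupp.linearCombination_single, one_smul,
      linComb_mk, hkτ, add_zero, ← hz', ← Submodule.Quotient.mk_add]
  -- A side
  obtain ⟨h, hh⟩ := Submodule.Quotient.mk_surjective _ (chi r a k (γ (k+1)))
  have hAside : chi r a k (γ 0)
      = Submodule.Quotient.mk ((∏ j ∈ Finset.Ioc 0 (k+1), a j) * h) := by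
    rw [hγprod (k+1), map_smul, ← hh, ← Submodule.Quotient.mk_smul, smul_eq_mul]
  have hP : Achi a k 0 = ∏ j ∈ Finset.Ioc 0 k, a j := by
    rw [Achi, if_pos (Nat.zero_le k)]
  have hP' : (∏ j ∈ Finset.Ioc 0 (k+1), a j) = (∏ j ∈ Finset.Ioc 0 k, a j) * a (k+1) :=
    Finset.prod_Ioc_succ_top (Nat.zero_le k) a
  set P : R := ∏ j ∈ Finset.Ioc 0 k, a j with hPdef
  have hcmem : Achi a k 0 + z - (∏ j ∈ Finset.Ioc 0 (k+1), a j) * h ∈ Ideal.span {r} := by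
    rw [← Submodule.Quotient.eq]
    rw [← hBside, ← hAside]
  obtain ⟨c, hc⟩ := Ideal.mem_span_singleton'.mp hcmem
  rw [hP, hP'] at hc
  have hry : r = P * y k := hyprod k
  have key : r * r * (1 - (a (k+1) * h + c * y k)) = 0 := by
    linear_combination (-(r * y k)) * hc + (-(y k)) * hz + (r - r * (a (k+1)) * h) * hry
  have hmem : a (k+1) * h + c * y k ∈ IsLocalRing.maximalIdeal R :=
    Ideal.add_mem _ (Ideal.mul_mem_right h _ (ha k)) (Ideal.mul_mem_left _ c (hy k))
  have hu : IsUnit (1 - (a (k+1) * h + c * y k)) := by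
    rcases IsLocalRing.isUnit_or_isUnit_of_add_one
      (a := a (k+1) * h + c * y k) (b := 1 - (a (k+1) * h + c * y k)) (by ring) with h' | h'
    · exact absurd h' (IsLocalRing.mem_maximalIdeal _ |>.mp hmem)
    · exact h'
  exact (IsUnit.mul_left_eq_zero hu).1 key

/-- If `(R, m)` is local and every `R`-module map seemingly divisible by an
element is divisible by it, then `m ≠ m²` unless `m = 0`. -/
theorem stmt7 {R : Type u} [CommRing R] [IsLocalRing R]
    (hR : ∀ (r : R) (M N : Type u) [AddCommGroup M] [Module R M] [AddCommGroup N]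
        [Module R N] (f : M →ₗ[R] N),
        (∀ m : M, r • m = 0 → f m = 0) → (∀ m : M, ∃ n : N, f m = r • n) →
        ∃ g : M →ₗ[R] N, f = r • g)
    (hm : IsLocalRing.maximalIdeal R ≠ ⊥) :
    IsLocalRing.maximalIdeal R ≠ (IsLocalRing.maximalIdeal R) ^ 2 := by
  intro h
  have hSD : SD R := hR
  obtain ⟨x, hx, hxne⟩ := (Submodule.ne_bot_iff _).1 hm
  obtain ⟨⟨p1, p2⟩, hp1, hp2, hxe⟩ := sd_fac hSD h hx
  simp only at hp1 hp2 hxe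
  apply hxne
  rcases sd_total hSD p1 p2 with hd | hd
  · obtain ⟨t, ht⟩ := Ideal.mem_span_singleton'.1 hd
    have h22 : p2 * p2 = 0 := sd_sq hSD h hp2
    rw [hxe, ← ht, mul_assoc, h22, mul_zero]
  · obtain ⟨t, ht⟩ := Ideal.mem_span_singleton'.1 hd
    have h11 : p1 * p1 = 0 := sd_sq hSD h hp1
    rw [hxe, ← ht]
    calc p1 * (t * p1) = t * (p1 * p1) := by ring
    _ = 0 := by rw [h11, mul_zero]
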